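/- BinomialHash achieves minimal disruption: for every n ≥ 1, every ω ≥ 1, every hash sequence h : ℕ → ℕ and every seeded hash H : ℕ → ℕ → ℕ, if lookup(n + 1, h, H) ≠ n then lookup(n, h, H) = lookup(n + 1, h, H). That is, when bucket n is removed from a cluster of n + 1 buckets, only the keys previously mapped to bucket n change bucket. -/

import Mathlib

/-- Relocation within a level: `reloc H b x = b` if `b < 2`, otherwise
`2^d + (H x (2^d − 1)) % 2^d` with `d = Nat.log 2 b`. -/
def reloc (H : ℕ → ℕ → ℕ) (b x : ℕ) : ℕ :=
  if b < 2 then b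
  else 2 ^ Nat.log 2 b + (H x (2 ^ Nat.log 2 b - 1)) % 2 ^ Nat.log 2 b

/-- The main loop of BinomialHash: starting at iteration `i` with `fuel`
remaining iterations, compute `c = reloc(h i % E, h i)`; if `c < M` fall back to
the minor tree, if `c < n` return `c`, otherwise continue; after the last
iteration fall back to the minor tree. -/
def binLoop (H : ℕ → ℕ → ℕ) (n M E : ℕ) (h : ℕ → ℕ) : ℕ → ℕ → ℕ
  | _, 0 => reloc H (h 0 % M) (h 0)
  | i, fuel + 1 =>
      let c := reloc H (h i % E) (h i)
      if c < M then reloc H (h 0 % M) (h 0)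
      else if c < n then c
      else binLoop H n M E h (i + 1) fuel

/-- The BinomialHash lookup with at most `ω` loop iterations: returns `0` when
`n = 1`, and otherwise runs the loop with `E = 2^l`, `M = 2^(l-1)`,
`l = Nat.clog 2 n`. -/
def binomialLookup (ω n : ℕ) (h : ℕ → ℕ) (H : ℕ → ℕ → ℕ) : ℕ :=
  if n = 1 then 0
  else binLoop H n (2 ^ (Nat.clog 2 n - 1)) (2 ^ Nat.clog 2 n) h 0 ω



lemma reloc_lt (H : ℕ → ℕ → ℕ) (x : ℕ) {b m : ℕ} (hm : 1 ≤ m) (hb : b < 2 ^ m) :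
    reloc H b x < 2 ^ m := by
  unfold reloc
  split
  · calc b < 2 := by assumption
      _ = 2 ^ 1 := rfl
      _ ≤ 2 ^ m := Nat.pow_le_pow_right (by norm_num) hm
  · have hb2 : ¬ b < 2 := by assumption
    have hd : Nat.log 2 b < m := Nat.log_lt_of_lt_pow (by omega) hb
    have hr : (H x (2 ^ Nat.log 2 b - 1)) % 2 ^ Nat.log 2 b < 2 ^ Nat.log 2 b :=
      Nat.mod_lt _ (Nat.pow_pos (by norm_num))
    calc 2 ^ Nat.log 2 b + (H x (2 ^ Nat.log 2 b - 1)) % 2 ^ Nat.log 2 b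
        < 2 ^ Nat.log 2 b + 2 ^ Nat.log 2 b := by omega
      _ = 2 ^ (Nat.log 2 b + 1) := by ring
      _ ≤ 2 ^ m := Nat.pow_le_pow_right (by norm_num) (by omega)

lemma lt_of_reloc_lt (H : ℕ → ℕ → ℕ) (x : ℕ) {b m : ℕ}
    (hlt : reloc H b x < 2 ^ m) : b < 2 ^ m := by
  unfold reloc at hlt
  split at hlt
  · exact hlt
  · have h1 : 2 ^ Nat.log 2 b < 2 ^ m := by omega
    have h2 : Nat.log 2 b < m := by
      exact (Nat.pow_lt_pow_iff_right (by norm_num)).mp h1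
    calc b < 2 ^ (Nat.log 2 b + 1) := Nat.lt_pow_succ_log_self (by norm_num) b
      _ ≤ 2 ^ m := Nat.pow_le_pow_right (by norm_num) (by omega)

lemma loopA (H : ℕ → ℕ → ℕ) (n M E : ℕ) (h : ℕ → ℕ) :
    ∀ fuel i, binLoop H (n+1) M E h i fuel ≠ n →
      binLoop H n M E h i fuel = binLoop H (n+1) M E h i fuel := by
  intro fuel
  induction fuel with
  | zero => intro i _; rfl
  | succ f ih =>
    intro i hne
    simp only [binLoop] at hne ⊢
    set c := reloc H (h i % E) (h i) with hc
    by_cases h1 : c < M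
    · simp [h1]
    · simp only [if_neg h1] at hne ⊢
      by_cases h2 : c < n
      · rw [if_pos h2, if_pos (by omega)]
      · rw [if_neg h2]
        by_cases h3 : c < n + 1
        · exfalso; rw [if_pos h3] at hne; omega
        · rw [if_neg h3] at hne ⊢; exact ih (i+1) hne

lemma loopB2 (H : ℕ → ℕ → ℕ) (h : ℕ → ℕ) (k : ℕ) :
    ∀ fuel i, binLoop H (2^k + 1) (2^k) (2^(k+1)) h i fuel ≠ 2^k →
      binLoop H (2^k + 1) (2^k) (2^(k+1)) h i fuel = reloc H (h 0 % 2^k) (h 0) := by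
  intro fuel
  induction fuel with
  | zero => intro i _; rfl
  | succ f ih =>
    intro i hne
    simp only [binLoop] at hne ⊢
    set c := reloc H (h i % 2^(k+1)) (h i) with hc
    by_cases h1 : c < 2^k
    · simp [h1]
    · simp only [if_neg h1] at hne ⊢
      by_cases h2 : c < 2^k + 1
      · exfalso; rw [if_pos h2] at hne; omega
      · rw [if_neg h2] at hne ⊢; exact ih (i+1) hne

/-- BinomialHash achieves minimal disruption: when bucket `n` is removed from a
cluster of `n + 1` buckets, only the keys previously mapped to bucket `n`
change bucket. -/
theorem binomialLookup_minimal_disruption (ω n : ℕ) (hω : 1 ≤ ω) (hn : 1 ≤ n)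
    (h : ℕ → ℕ) (H : ℕ → ℕ → ℕ)
    (hne : binomialLookup ω (n + 1) h H ≠ n) :
    binomialLookup ω n h H = binomialLookup ω (n + 1) h H := by
  obtain ⟨f, rfl⟩ : ∃ f, ω = f + 1 := ⟨ω - 1, by omega⟩
  rcases Nat.lt_or_ge n 2 with h2 | h2
  · -- n = 1
    have hn1 : n = 1 := by omega
    subst hn1
    have hc2 : Nat.clog 2 2 = 1 := Nat.clog_eq_one (by norm_num) (by norm_num)
    unfold binomialLookup at hne ⊢
    rw [if_pos rfl]
    rw [if_neg (by norm_num), hc2] at hne ⊢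
    simp only [binLoop] at hne ⊢
    have hmod : h 0 % 2 ^ 1 < 2 := Nat.mod_lt _ (by norm_num)
    have hrel : reloc H (h 0 % 2 ^ 1) (h 0) = h 0 % 2 ^ 1 := by
      unfold reloc; rw [if_pos hmod]
    rw [hrel] at hne ⊢
    have : h 0 % 2 ^ 1 = 0 ∨ h 0 % 2 ^ 1 = 1 := by omega
    rcases this with h0 | h0
    · rw [h0]
      simp [reloc, Nat.mod_one]
    · rw [h0] at hne
      norm_num at hne
  · -- n ≥ 2
    have hne1 : n ≠ 1 := by omega
    have hne1' : n + 1 ≠ 1 := by omega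
    by_cases heq : Nat.clog 2 (n + 1) = Nat.clog 2 n
    · unfold binomialLookup at hne ⊢
      rw [if_neg hne1']
      rw [if_neg hne1', heq] at hne
      rw [if_neg hne1, heq]
      exact loopA H n _ _ h _ 0 hne
    · -- n is a power of two
      set k := Nat.clog 2 n with hk
      have hle : n ≤ 2 ^ k := Nat.le_pow_clog (by norm_num) n
      have hmono : Nat.clog 2 n ≤ Nat.clog 2 (n + 1) :=
        Nat.clog_mono_right 2 (by omega)
      have hgt : k < Nat.clog 2 (n + 1) := by omega
      have h2k : 2 ^ k < n + 1 := (Nat.lt_clog_iff_pow_lt (by norm_num)).mp hgt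
      have hnk : n = 2 ^ k := by omega
      have hk1 : 1 ≤ k := by
        by_contra hcon
        have : k = 0 := by omega
        rw [this] at hnk; omega
      have hclog1 : Nat.clog 2 (n + 1) = k + 1 := by
        have hub : Nat.clog 2 (n + 1) ≤ k + 1 := by
          rw [Nat.clog_le_iff_le_pow (by norm_num : 1 < 2)]
          have : 1 ≤ 2 ^ k := Nat.one_le_two_pow
          calc n + 1 = 2 ^ k + 1 := by omega
            _ ≤ 2 ^ k + 2 ^ k := by omega
            _ = 2 ^ (k + 1) := by ring
        omega
      -- compute lookup (n+1)
      unfold binomialLookup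
      rw [if_neg hne1', if_neg hne1, hclog1, ← hk]
      have hsimp : k + 1 - 1 = k := by omega
      rw [hsimp]
      unfold binomialLookup at hne
      rw [if_neg hne1', hclog1, hsimp] at hne
      rw [hnk] at hne ⊢
      rw [loopB2 H h k (f + 1) 0 hne]
      -- compute lookup n
      simp only [binLoop]
      set b := h 0 % 2 ^ k with hb
      set c := reloc H b (h 0) with hc
      by_cases h1 : c < 2 ^ (k - 1)
      · rw [if_pos h1]
        have hblt : b < 2 ^ (k - 1) := lt_of_reloc_lt H (h 0) h1
        have hdvd : (2:ℕ) ^ (k - 1) ∣ 2 ^ k := pow_dvd_pow 2 (by omega)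
        have hmm : h 0 % 2 ^ (k - 1) = b := by
          rw [hb, ← Nat.mod_mod_of_dvd (h 0) hdvd]
          exact Nat.mod_eq_of_lt hblt
        rw [hmm, ← hc]
      · rw [if_neg h1]
        have hblt : b < 2 ^ k := Nat.mod_lt _ (Nat.pow_pos (by norm_num))
        have : c < 2 ^ k := reloc_lt H (h 0) hk1 hblt
        rw [if_pos this]
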